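/- Let m, n be positive integers and G a finite nilpotent group that can be generated by m elements. Suppose G is generated by a set of n-Engel elements. Then G can be generated by m elements each of which is n-Engel. -/

import Mathlib

open scoped commutatorElement

/-- The left-normed iterated commutator `[x, y, y, ..., y]` with `n` copies of `y`. -/
def engelComm {G : Type*} [Group G] (x y : G) : ℕ → G
  | 0 => x
  | n + 1 => ⁅engelComm x y n, y⁆

/-- `y` is an `n`-Engel element of `G`. -/
def IsNEngel {G : Type*} [Group G] (n : ℕ) (y : G) : Prop :=
  ∀ x : G, engelComm x y n = 1

lemma engelComm_map {G H : Type*} [Group G] [Group H] (φ : G →* H) (x y : G) (n : ℕ) :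
    φ (engelComm x y n) = engelComm (φ x) (φ y) n := by
  induction n with
  | zero => rfl
  | succ k ih => simp [engelComm, map_commutatorElement, ih]

lemma IsNEngel.map {G H : Type*} [Group G] [Group H] (φ : G →* H)
    (hφ : Function.Surjective φ) {n : ℕ} {y : G} (h : IsNEngel n y) : IsNEngel n (φ y) := by
  intro x
  obtain ⟨x', rfl⟩ := hφ x
  rw [← engelComm_map, h x', map_one]

lemma isNEngel_one {G : Type*} [Group G] {n : ℕ} (hn : 0 < n) : IsNEngel n (1 : G) := by
  intro x
  obtain ⟨k, rfl⟩ := Nat.exists_eq_succ_of_ne_zero hn.ne'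
  simp [engelComm]


lemma coatom_facts {P : Type*} [Group P] [Finite P] {p : ℕ} [hp : Fact p.Prime]
    (hP : IsPGroup p P) {M : Subgroup P} (hM : IsCoatom M) :
    (∀ x y : P, ⁅x, y⁆ ∈ M) ∧ (∀ x : P, x ^ p ∈ M) := by
  haveI : Group.IsNilpotent P := hP.isNilpotent
  have h02 := (isNilpotent_of_finite_tfae (G := P)).out 0 2
  haveI hnormal : M.Normal := h02.mp ‹Group.IsNilpotent P› M hM
  set π := QuotientGroup.mk' M with hπ
  have hsurj : Function.Surjective π := QuotientGroup.mk'_surjective M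
  have hker : π.ker = M := QuotientGroup.ker_mk' M
  -- subgroups of the quotient are ⊥ or ⊤
  have hbt : ∀ K : Subgroup (P ⧸ M), K = ⊥ ∨ K = ⊤ := by
    intro K
    have hMle : M ≤ K.comap π := by
      intro x hx
      have : π x = 1 := by rwa [← MonoidHom.mem_ker, hker]
      simp [Subgroup.mem_comap, this, one_mem]
    have hKmap : K = Subgroup.map π (K.comap π) :=
      (Subgroup.map_comap_eq_self_of_surjective hsurj K).symm
    rcases eq_or_lt_of_le hMle with h | h
    · left
      rw [hKmap, ← h]
      rw [eq_bot_iff]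
      rintro _ ⟨x, hx, rfl⟩
      have : π x = 1 := by rw [← hker] at hx; exact hx
      simp [this]
    · right
      rw [hKmap, hM.2 _ h]
      exact Subgroup.map_top_of_surjective π hsurj
  have hQp : IsPGroup p (P ⧸ M) := hP.to_quotient M
  -- every nontrivial element generates, and has order p
  have hgen : ∀ a : P ⧸ M, a ≠ 1 → Subgroup.zpowers a = ⊤ ∧ orderOf a = p := by
    intro a ha
    have hz : Subgroup.zpowers a = ⊤ := by
      rcases hbt (Subgroup.zpowers a) with h | h
      · exact absurd (Subgroup.zpowers_eq_bot.mp h) ha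
      · exact h
    -- p divides orderOf a
    have hpdvd : p ∣ orderOf a := by
      obtain ⟨k, hk⟩ := hQp a
      have : orderOf a ∣ p ^ k := orderOf_dvd_of_pow_eq_one hk
      obtain ⟨l, hl, hol⟩ := (Nat.dvd_prime_pow hp.out).mp this
      have hl1 : l ≠ 0 := by
        rintro rfl
        rw [pow_zero] at hol
        exact ha (orderOf_eq_one_iff.mp hol)
      rw [hol]
      exact dvd_pow_self p hl1
    have hap : a ^ p = 1 := by
      rcases hbt (Subgroup.zpowers (a ^ p)) with h | h
      · exact Subgroup.zpowers_eq_bot.mp h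
      · exfalso
        have : a ∈ Subgroup.zpowers (a ^ p) := h ▸ Subgroup.mem_top a
        obtain ⟨j, hj⟩ := this
        have hj' : (a ^ p) ^ j = a := hj
        have h1 : a ^ ((p : ℤ) * j - 1) = 1 := by
          rw [zpow_sub, zpow_one, zpow_mul, zpow_natCast, hj', mul_inv_cancel]
        have h2 : (orderOf a : ℤ) ∣ (p : ℤ) * j - 1 := orderOf_dvd_iff_zpow_eq_one.mpr h1
        have h3 : (p : ℤ) ∣ (p : ℤ) * j - 1 :=
          dvd_trans (Int.natCast_dvd_natCast.mpr hpdvd) h2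
        have h4 : (p : ℤ) ∣ 1 := (dvd_sub_right ⟨j, rfl⟩).mp h3
        have := Int.le_of_dvd one_pos h4
        have hp2 := hp.out.two_le
        omega
    refine ⟨hz, ?_⟩
    have : orderOf a ∣ p := orderOf_dvd_of_pow_eq_one hap
    rcases (Nat.dvd_prime hp.out).mp this with h | h
    · exact absurd (orderOf_eq_one_iff.mp h) ha
    · exact h
  constructor
  · intro x y
    rw [← hker, MonoidHom.mem_ker, map_commutatorElement, commutatorElement_eq_one_iff_commute]
    by_cases hx : π x = 1
    · rw [hx]; exact Commute.one_left _
    obtain ⟨hz, -⟩ := hgen (π x) hx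
    have hy : π y ∈ Subgroup.zpowers (π x) := hz ▸ Subgroup.mem_top _
    obtain ⟨j, hj⟩ := hy
    rw [← hj]
    exact (Commute.refl (π x)).zpow_right j
  · intro x
    rw [← hker, MonoidHom.mem_ker, map_pow]
    by_cases hx : π x = 1
    · rw [hx, one_pow]
    · obtain ⟨-, ho⟩ := hgen (π x) hx
      rw [← ho]
      exact pow_orderOf_eq_one _


section bridge

variable {p : ℕ} [NeZero p] {V : Type*} [CommGroup V] [Module (ZMod p) (Additive V)]

lemma closure_le_span (T : Set V) {v : V} (hv : v ∈ Subgroup.closure T) :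
    Additive.ofMul v ∈ Submodule.span (ZMod p) (Additive.ofMul '' T) := by
  induction hv using Subgroup.closure_induction with
  | mem x hx => exact Submodule.subset_span ⟨x, hx, rfl⟩
  | one => exact zero_mem _
  | mul x y hx hy ihx ihy => exact add_mem ihx ihy
  | inv x hx ihx => exact neg_mem ihx

lemma span_le_closure (B : Set (Additive V)) {b : Additive V}
    (hb : b ∈ Submodule.span (ZMod p) B) :
    Additive.toMul b ∈ Subgroup.closure (Additive.toMul '' B) := by
  set H := Subgroup.closure (Additive.toMul '' B) with hH
  set N : Submodule (ZMod p) (Additive V) :=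
    AddSubgroup.toZModSubmodule p (Subgroup.toAddSubgroup H) with hN
  have hBN : B ⊆ (N : Set (Additive V)) := by
    intro x hx
    have : Additive.toMul x ∈ H := Subgroup.subset_closure ⟨x, hx, rfl⟩
    simpa [hN] using this
  have := Submodule.span_le.mpr hBN hb
  simpa [hN] using this

end bridge

lemma pgroup_select {P : Type*} [Group P] [Finite P] {p : ℕ} [hp : Fact p.Prime]
    (hP : IsPGroup p P) (S : Set P) (hS : Subgroup.closure S = ⊤)
    {m : ℕ} (f : Fin m → P) (hf : Subgroup.closure (Set.range f) = ⊤) :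
    ∃ g : Fin m → P, (∀ i, g i = 1 ∨ g i ∈ S) ∧ Subgroup.closure (Set.range g) = ⊤ := by
  classical
  set Φ := frattini P with hΦ
  have hmemΦ : ∀ x : P, (∀ M : Subgroup P, IsCoatom M → x ∈ M) → x ∈ Φ := by
    intro x hx
    rw [hΦ, frattini, Order.radical]
    simp only [Subgroup.mem_iInf]
    exact hx
  have hcomm : ∀ x y : P, ⁅x, y⁆ ∈ Φ := fun x y =>
    hmemΦ _ fun M hM => (coatom_facts hP hM).1 x y
  have hpowΦ : ∀ x : P, x ^ p ∈ Φ := fun x =>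
    hmemΦ _ fun M hM => (coatom_facts hP hM).2 x
  set V := P ⧸ Φ with hV
  set π : P →* V := QuotientGroup.mk' Φ with hπdef
  have hπsurj : Function.Surjective π := QuotientGroup.mk'_surjective Φ
  have hVcomm : ∀ u v : V, u * v = v * u := by
    intro u v
    obtain ⟨x, rfl⟩ := hπsurj u
    obtain ⟨y, rfl⟩ := hπsurj v
    have h1 : ⁅π x, π y⁆ = 1 := by
      rw [← map_commutatorElement]
      exact (QuotientGroup.eq_one_iff _).mpr (hcomm x y)
    exact (commutatorElement_eq_one_iff_commute.mp h1).eq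
  have hVpow : ∀ u : V, u ^ p = 1 := by
    intro u
    obtain ⟨x, rfl⟩ := hπsurj u
    rw [← map_pow]
    exact (QuotientGroup.eq_one_iff _).mpr (hpowΦ x)
  letI instV : CommGroup V := { (inferInstance : Group V) with mul_comm := hVcomm }
  haveI : NeZero p := ⟨hp.out.pos.ne'⟩
  have hsmul : ∀ x : Additive V, p • x = 0 := fun x => by
    have := hVpow (Additive.toMul x)
    rw [← ofMul_toMul x, ← ofMul_pow, this, ofMul_one]
  letI instM : Module (ZMod p) (Additive V) := AddCommGroup.zmodModule hsmul
  have _h4 := (inferInstance : Module (ZMod p) (Additive V))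
  -- images generate
  have hSV : Subgroup.closure (⇑π '' S) = ⊤ := by
    rw [← MonoidHom.map_closure, hS]
    exact Subgroup.map_top_of_surjective π hπsurj
  set T : Set (Additive V) := Additive.ofMul '' (⇑π '' S) with hT
  have hTspan : Submodule.span (ZMod p) T = ⊤ := by
    rw [Submodule.eq_top_iff']
    intro a
    have h1 : Additive.toMul a ∈ Subgroup.closure (⇑π '' S) := hSV ▸ Subgroup.mem_top _
    simpa using closure_le_span (p := p) _ h1
  obtain ⟨B, hBT, hBspan, hBli⟩ := exists_linearIndependent (ZMod p) T
  rw [hTspan] at hBspan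
  haveI : Fintype B := (Set.toFinite B).fintype
  -- card B ≤ finrank ≤ m
  have hcardB : Fintype.card B ≤ m := by
    have h1 : Fintype.card B ≤ Module.finrank (ZMod p) (Additive V) :=
      hBli.fintype_card_le_finrank
    refine h1.trans ?_
    set F : Fin m → Additive V := fun i => Additive.ofMul (π (f i)) with hF
    have hFspan : Submodule.span (ZMod p) (Set.range F) = ⊤ := by
      rw [Submodule.eq_top_iff']
      intro a
      have h2 : Subgroup.closure (⇑π '' Set.range f) = ⊤ := by
        rw [← MonoidHom.map_closure, hf]
        exact Subgroup.map_top_of_surjective π hπsurj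
      have h3 : Additive.toMul a ∈ Subgroup.closure (⇑π '' Set.range f) :=
        h2 ▸ Subgroup.mem_top _
      have h4 := closure_le_span (p := p) _ h3
      have h5 : Additive.ofMul '' (⇑π '' Set.range f) = Set.range F := by
        rw [hF, ← Set.range_comp, ← Set.range_comp]
        rfl
      rw [h5] at h4
      simpa using h4
    calc Module.finrank (ZMod p) (Additive V)
        = Module.finrank (ZMod p) (Submodule.span (ZMod p) (Set.range F)) := by
          rw [hFspan]; exact (finrank_top _ _).symm
      _ ≤ (Set.range F).toFinset.card := finrank_span_le_card _
      _ ≤ m := by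
          rw [Set.toFinset_range]
          exact (Finset.card_image_le).trans (by simp)
  -- choose preimages in S
  have hpre : ∀ b : B, ∃ s : P, s ∈ S ∧ Additive.ofMul (π s) = (b : Additive V) := by
    intro b
    obtain ⟨v, ⟨s, hs, rfl⟩, hv⟩ := hBT b.2
    exact ⟨s, hs, hv⟩
  choose σ hσS hσπ using hpre
  set eB := Fintype.equivFin B with heB
  set g : Fin m → P := fun i =>
    if h : (i : ℕ) < Fintype.card B then σ (eB.symm ⟨i, h⟩) else 1 with hg
  refine ⟨g, ?_, ?_⟩
  · intro i
    by_cases h : (i : ℕ) < Fintype.card B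
    · right; rw [hg]; simp only [dif_pos h]; exact hσS _
    · left; rw [hg]; simp only [dif_neg h]
  · -- closure (range g) = ⊤
    set K := Subgroup.closure (Set.range g) with hK
    have hmap : Subgroup.map π K = ⊤ := by
      rw [hK, MonoidHom.map_closure, Subgroup.eq_top_iff']
      intro v
      have h1 : Additive.ofMul v ∈ Submodule.span (ZMod p) B := hBspan ▸ Submodule.mem_top
      have h2 := span_le_closure (p := p) B h1
      have h3 : Additive.toMul '' B ⊆ ⇑π '' Set.range g := by
        rintro _ ⟨b, hb, rfl⟩
        set b' : B := ⟨b, hb⟩ with hb'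
        have hlt : ((eB b' : Fin (Fintype.card B)) : ℕ) < Fintype.card B := (eB b').2
        have hltm : ((eB b' : Fin (Fintype.card B)) : ℕ) < m := lt_of_lt_of_le hlt hcardB
        refine ⟨σ b', ?_, ?_⟩
        · have hgi : g ⟨(eB b' : Fin (Fintype.card B)), hltm⟩ = σ b' := by
            rw [hg]
            simp only [dif_pos hlt]
            congr 1
            simp [Fin.eta]
          exact ⟨_, hgi⟩
        · have h6 := hσπ b'
          have := congrArg Additive.toMul h6
          simpa using this
      have h2' : v ∈ Subgroup.closure (Additive.toMul '' B) := by simpa using h2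
      exact Subgroup.closure_mono h3 h2'
    -- K ⊔ Φ = ⊤ and conclude by the Frattini nongenerating property
    have hsup : K ⊔ Φ = ⊤ := by
      rw [Subgroup.eq_top_iff']
      intro x
      have : π x ∈ Subgroup.map π K := hmap ▸ Subgroup.mem_top _
      obtain ⟨k, hk, hkx⟩ := this
      have hker : k⁻¹ * x ∈ Φ := by
        have : π (k⁻¹ * x) = 1 := by
          rw [map_mul, map_inv, hkx, inv_mul_cancel]
        exact (QuotientGroup.eq_one_iff _).mp this
      have : x = k * (k⁻¹ * x) := by group
      rw [this]
      exact Subgroup.mul_mem _ (Subgroup.mem_sup_left hk) (Subgroup.mem_sup_right hker)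
    exact frattini_nongenerating (hΦ ▸ hsup)


lemma pi_closure_eq_top {η : Type*} [Fintype η] [DecidableEq η] {Q : η → Type*}
    [∀ p, Group (Q p)] [∀ p, Finite (Q p)]
    (hco : Pairwise fun p q => (Nat.card (Q p)).Coprime (Nat.card (Q q)))
    (S : Set (∀ p, Q p))
    (hS : ∀ p, Subgroup.closure ((fun z => z p) '' S) = ⊤) :
    Subgroup.closure S = ⊤ := by
  set H := Subgroup.closure S with hH
  -- for each h ∈ H and p, the "p-component" of h lies in H
  have key : ∀ p : η, ∀ h ∈ H, Pi.mulSingle p (h p) ∈ H := by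
    intro p h hh
    set c := Nat.card (Q p) with hc
    have hc0 : c ≠ 0 := Nat.card_pos.ne'
    haveI : NeZero c := ⟨hc0⟩
    set M : ℕ := ∏ q ∈ Finset.univ.erase p, Nat.card (Q q) with hM
    have hcop : M.Coprime c := by
      apply Nat.Coprime.prod_left
      intro q hq
      exact hco (Finset.ne_of_mem_erase hq)
    set u : (ZMod c)ˣ := ZMod.unitOfCoprime M hcop with hu
    set k : ℕ := M * ((u⁻¹ : (ZMod c)ˣ) : ZMod c).val with hk
    have hk1 : (k : ZMod c) = 1 := by
      push_cast [hk]
      rw [ZMod.natCast_rightInverse _]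
      have : (M : ZMod c) = (u : ZMod c) := rfl
      rw [this, ← Units.val_mul, mul_inv_cancel, Units.val_one]
    have hpow : h ^ k = Pi.mulSingle p (h p) := by
      funext q
      rw [Pi.pow_apply]
      by_cases hqp : q = p
      · subst hqp
        rw [Pi.mulSingle_eq_same]
        have hdvd : orderOf (h q) ∣ c := orderOf_dvd_natCard _
        have : k ≡ 1 [MOD orderOf (h q)] := by
          refine Nat.ModEq.of_dvd hdvd ?_
          rw [← ZMod.natCast_eq_natCast_iff]
          simpa using hk1
        calc h q ^ k = h q ^ 1 := by rw [pow_eq_pow_iff_modEq]; exact this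
        _ = h q := pow_one _
      · rw [Pi.mulSingle_eq_of_ne hqp]
        have hdvd : orderOf (h q) ∣ k := by
          refine dvd_trans (orderOf_dvd_natCard _) (dvd_trans ?_ (Dvd.intro _ rfl))
          exact Finset.dvd_prod_of_mem _ (Finset.mem_erase.mpr ⟨hqp, Finset.mem_univ q⟩)
        exact orderOf_dvd_iff_pow_eq_one.mp hdvd
    rw [← hpow]
    exact pow_mem hh k
  have single_mem : ∀ (p : η) (a : Q p), Pi.mulSingle p a ∈ H := by
    intro p a
    have hle : Subgroup.closure ((fun z => z p) '' S) ≤ H.comap (MonoidHom.mulSingle Q p) := by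
      rw [Subgroup.closure_le]
      rintro _ ⟨s, hs, rfl⟩
      exact key p s (Subgroup.subset_closure hs)
    rw [hS p] at hle
    exact hle (Subgroup.mem_top a)
  rw [Subgroup.eq_top_iff']
  intro x
  exact Subgroup.pi_mem_of_mulSingle_mem x fun p => single_mem p (x p)
lemma IsPGroup.pi' {p : ℕ} {η : Type*} [Finite η] {Q : η → Type*} [∀ i, Group (Q i)]
    (h : ∀ i, IsPGroup p (Q i)) : IsPGroup p (∀ i, Q i) := by
  classical
  cases nonempty_fintype η
  intro g
  choose k hk using fun i => h i (g i)
  refine ⟨Finset.univ.sup k, ?_⟩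
  funext i
  have hle : k i ≤ Finset.univ.sup k := Finset.le_sup (Finset.mem_univ i)
  calc (g ^ p ^ Finset.univ.sup k) i = (g i) ^ p ^ Finset.univ.sup k := Pi.pow_apply g _ i
    _ = ((g i) ^ p ^ k i) ^ p ^ (Finset.univ.sup k - k i) := by
        rw [← pow_mul, ← pow_add, Nat.add_sub_cancel' hle]
    _ = 1 := by rw [hk, one_pow]
  
lemma pi_select {η : Type*} [Fintype η] [DecidableEq η] {Q : η → Type*}
    [∀ p, Group (Q p)] [∀ p, Finite (Q p)]
    (P : η → ℕ) (hprime : ∀ p, Fact (P p).Prime) (hQ : ∀ p, IsPGroup (P p) (Q p))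
    (hPne : ∀ p q : η, p ≠ q → P p ≠ P q)
    (m n : ℕ) (hn : 0 < n)
    (X : Set (∀ p, Q p)) (hXE : ∀ y ∈ X, IsNEngel n y) (hX : Subgroup.closure X = ⊤)
    (f : Fin m → ∀ p, Q p) (hf : Subgroup.closure (Set.range f) = ⊤) :
    ∃ g : Fin m → ∀ p, Q p, (∀ i, IsNEngel n (g i)) ∧ Subgroup.closure (Set.range g) = ⊤ := by
  classical
  have hsurj : ∀ p, Function.Surjective (Pi.evalMonoidHom Q p) :=
    fun p => Function.surjective_eval p
  -- per-component generating sets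
  have hSp : ∀ p, Subgroup.closure ((fun z => z p) '' X) = ⊤ := by
    intro p
    have := congrArg (Subgroup.map (Pi.evalMonoidHom Q p)) hX
    rw [MonoidHom.map_closure] at this
    rw [show ((fun z => z p) '' X) = ⇑(Pi.evalMonoidHom Q p) '' X from rfl, this]
    exact Subgroup.map_top_of_surjective _ (hsurj p)
  have hfp : ∀ p, Subgroup.closure (Set.range fun i => f i p) = ⊤ := by
    intro p
    have := congrArg (Subgroup.map (Pi.evalMonoidHom Q p)) hf
    rw [MonoidHom.map_closure] at this
    have himg : ⇑(Pi.evalMonoidHom Q p) '' Set.range f = Set.range fun i => f i p := by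
      rw [← Set.range_comp]; rfl
    rw [← himg, this]
    exact Subgroup.map_top_of_surjective _ (hsurj p)
  -- select generators in each component
  have hsel : ∀ p, ∃ gp : Fin m → Q p,
      (∀ i, gp i = 1 ∨ gp i ∈ (fun z => z p) '' X) ∧
      Subgroup.closure (Set.range gp) = ⊤ := by
    intro p
    haveI := hprime p
    exact pgroup_select (hQ p) _ (hSp p) _ (hfp p)
  choose gs hgs1 hgs2 using hsel
  refine ⟨fun i p => gs p i, ?_, ?_⟩
  · -- each generator is n-Engel
    intro i x
    funext p
    have h1 : engelComm x (fun p => gs p i) n p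
        = engelComm (x p) (gs p i) n :=
      engelComm_map (Pi.evalMonoidHom Q p) x (fun p => gs p i) n
    rw [Pi.one_apply, h1]
    rcases hgs1 p i with h | h
    · rw [h]
      exact isNEngel_one hn (x p)
    · obtain ⟨y, hy, hyp⟩ := h
      have hyE : IsNEngel n (y p) :=
        (hXE y hy).map (Pi.evalMonoidHom Q p) (hsurj p)
      rw [← hyp]
      exact hyE (x p)
  · -- generation
    refine pi_closure_eq_top ?_ _ ?_
    · intro p q hpq
      haveI := hprime p
      haveI := hprime q
      obtain ⟨a, ha⟩ := (IsPGroup.iff_card).mp (hQ p)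
      obtain ⟨b, hb⟩ := (IsPGroup.iff_card).mp (hQ q)
      rw [ha, hb]
      exact (((Nat.coprime_primes (hprime p).out (hprime q).out).mpr
        (hPne p q hpq))).pow a b
    · intro p
      have himg : ((fun z => z p) '' Set.range fun i p => gs p i) = Set.range (gs p) := by
        rw [← Set.range_comp]; rfl
      rw [himg]
      exact hgs2 p

theorem stmt5 {G : Type*} [Group G] [Finite G] (hG : Group.IsNilpotent G)
    (m n : ℕ) (hm : 0 < m) (hn : 0 < n)
    (hgen : ∃ f : Fin m → G, Subgroup.closure (Set.range f) = ⊤)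
    (X : Set G) (hXE : ∀ y ∈ X, IsNEngel n y) (hX : Subgroup.closure X = ⊤) :
    ∃ f : Fin m → G, (∀ i, IsNEngel n (f i)) ∧ Subgroup.closure (Set.range f) = ⊤ := by
  classical
  obtain ⟨f0, hf0⟩ := hgen
  have h04 := (isNilpotent_of_finite_tfae (G := G)).out 0 4
  obtain ⟨e⟩ := h04.mp hG
  set φ : G →* (∀ p : (Nat.card G).primeFactors, ∀ P : Sylow (p : ℕ) G, ↥(P : Subgroup G)) :=
    e.symm.toMonoidHom with hφdef
  have hφs : Function.Surjective φ := e.symm.surjective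
  have hX' : Subgroup.closure (⇑φ '' X) = ⊤ := by
    have h := congrArg (Subgroup.map φ) hX
    rw [MonoidHom.map_closure] at h
    rw [h]
    exact Subgroup.map_top_of_surjective _ hφs
  have hf0' : Subgroup.closure (Set.range (⇑φ ∘ f0)) = ⊤ := by
    have h := congrArg (Subgroup.map φ) hf0
    rw [MonoidHom.map_closure] at h
    rw [Set.range_comp, h]
    exact Subgroup.map_top_of_surjective _ hφs
  have hprime : ∀ p : (Nat.card G).primeFactors, Fact (Nat.Prime ((p : ℕ))) :=
    fun p => ⟨Nat.prime_of_mem_primeFactors p.2⟩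
  have hQp : ∀ p : (Nat.card G).primeFactors,
      IsPGroup (p : ℕ) (∀ P : Sylow (p : ℕ) G, ↥(P : Subgroup G)) := by
    intro p
    haveI := hprime p
    exact IsPGroup.pi' (fun P => P.isPGroup')
  obtain ⟨g, hg1, hg2⟩ := pi_select (fun p : (Nat.card G).primeFactors => (p : ℕ))
    hprime hQp
    (fun p q hpq h => hpq (Subtype.ext h)) m n hn
    (⇑φ '' X) (by rintro _ ⟨x, hx, rfl⟩; exact (hXE x hx).map φ hφs) hX'
    (⇑φ ∘ f0) hf0'
  refine ⟨⇑e.toMonoidHom ∘ g, ?_, ?_⟩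
  · intro i
    exact (hg1 i).map e.toMonoidHom e.surjective
  · have h := congrArg (Subgroup.map e.toMonoidHom) hg2
    rw [MonoidHom.map_closure] at h
    rw [Set.range_comp, h]
    exact Subgroup.map_top_of_surjective _ e.surjective
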